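/- Let G = (V,E) be a graph such that od_k(G) ≤ 2k for some positive integer k, i.e., G admits a 2k-dimensional orthogonal k-subspace representation. Then G is 2-colorable (bipartite). -/

import Mathlib

open Matrix

theorem two_colorable_of_odk_le_two_k {V : Type} (G : SimpleGraph V)
    (k : ℕ) (hk : 0 < k)
    (U : V → Submodule ℝ (Fin (2 * k) → ℝ))
    (hdim : ∀ v, Module.finrank ℝ (U v) = k)
    (horth : ∀ v v', G.Adj v v' → ∀ x ∈ U v, ∀ y ∈ U v', x ⬝ᵥ y = 0) :
    G.Colorable 2 := by
  classical
  set E := EuclideanSpace ℝ (Fin (2 * k))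
  let e : E ≃ₗ[ℝ] (Fin (2 * k) → ℝ) := WithLp.linearEquiv 2 ℝ _
  set W : V → Submodule ℝ E := fun v => (U v).comap e.toLinearMap with hW
  have hWdim : ∀ v, Module.finrank ℝ (W v) = k := by
    intro v
    rw [hW]
    simp only
    have h := (LinearEquiv.ofSubmodules e _ (U v) (Submodule.map_comap_eq_of_surjective e.surjective _)).finrank_eq
    rw [h]
    exact hdim v
  have hle : ∀ v v', G.Adj v v' → W v' ≤ (W v)ᗮ := by
    intro v v' hadj y hy
    rw [Submodule.mem_orthogonal]
    intro x hx
    have := horth v v' hadj (e x) hx (e y) hy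
    have hdot : (e x) ⬝ᵥ (e y) = (inner ℝ x y : ℝ) := by
      simp only [dotProduct]
      rw [show (inner ℝ x y : ℝ) = ∑ i, (starRingEnd ℝ) (x i) * y i from by rw [PiLp.inner_apply]; exact Finset.sum_congr rfl (fun i _ => by simp [mul_comm])]
      simp only [conj_trivial]
      rfl
    rw [hdot] at this
    exact this
  have heq : ∀ v v', G.Adj v v' → W v' = (W v)ᗮ := by
    intro v v' hadj
    apply Submodule.eq_of_le_of_finrank_eq (hle v v' hadj)
    have h1 := Submodule.finrank_add_finrank_orthogonal (K := W v)
    have h2 : Module.finrank ℝ E = 2 * k := finrank_euclideanSpace_fin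
    rw [hWdim v, h2] at h1
    rw [hWdim v']
    omega
  have hne : ∀ v, W v ≠ (W v)ᗮ := by
    intro v h
    have hdisj : W v ⊓ (W v)ᗮ = ⊥ := Submodule.inf_orthogonal_eq_bot _
    rw [← h, inf_idem] at hdisj
    have := hWdim v
    rw [hdisj] at this
    simp at this
    omega
  -- well-order on submodules
  let r : Submodule ℝ E → Submodule ℝ E → Prop := WellOrderingRel
  haveI : IsWellOrder (Submodule ℝ E) r := WellOrderingRel.isWellOrder
  refine ⟨SimpleGraph.Coloring.mk (fun v => if r (W v) (W v)ᗮ then 0 else 1) ?_⟩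
  intro v v' hadj
  have h1 : W v' = (W v)ᗮ := heq v v' hadj
  have h2 : (W v')ᗮ = W v := by
    rw [h1, Submodule.orthogonal_orthogonal]
  simp only [h1, h2]
  rw [Submodule.orthogonal_orthogonal (W v)]
  rcases trichotomous_of r (W v) (W v)ᗮ with h | h | h
  · rw [if_pos h, if_neg (asymm h)]
    decide
  · exact absurd h (hne v)
  · rw [if_neg (asymm h), if_pos h]
    decide
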